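/- The number of semistandard tableaux of hook shape (M+1, 1^{N−1}) with entries in {0, 1, …, d} (rows weakly increasing, columns strictly increasing) equals (d+M+1 choose M+N)·(M+N−1 choose M), for natural numbers M, d and positive N with N ≤ d+1. -/

import Mathlib

open Finset

/-- Increment lemma for strictly monotone functions on `Fin`. -/
lemma strictMono_add_le {K m : ℕ} {g : Fin m → Fin K} (hg : StrictMono g)
    {i j : Fin m} (h : i ≤ j) : (g i : ℕ) + ((j : ℕ) - i) ≤ g j := by
  obtain ⟨t, ht⟩ : ∃ t, (j : ℕ) = (i : ℕ) + t := ⟨j - i, by omega⟩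
  clear h
  induction t generalizing j with
  | zero =>
      have : j = i := Fin.val_inj.mp (by omega)
      subst this
      omega
  | succ t ih =>
      have hj' : (i : ℕ) + t < m := by omega
      have h1 := ih (j := ⟨(i : ℕ) + t, hj'⟩) rfl
      have h2 : g ⟨(i : ℕ) + t, hj'⟩ < g j := hg (by simp [Fin.lt_def, ht])
      simp only [Fin.lt_def] at h2
      simp only at h1
      omega

/-- Strictly monotone maps `Fin m → Fin n` are counted by `n.choose m`. -/
lemma card_strictMonoFun (m n : ℕ) :
    (Finset.univ.filter fun f : Fin m → Fin n => StrictMono f).card = n.choose m := by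
  rw [← Fintype.card_subtype]
  have e : {f : Fin m → Fin n // StrictMono f} ≃ {s : Finset (Fin n) // s.card = m} :=
    { toFun := fun f => ⟨Finset.univ.image f.1, by
        rw [Finset.card_image_of_injective _ f.2.injective, Finset.card_univ,
          Fintype.card_fin]⟩
      invFun := fun s => ⟨s.1.orderEmbOfFin s.2, (s.1.orderEmbOfFin s.2).strictMono⟩
      left_inv := fun f => by
        ext : 1
        exact (Finset.orderEmbOfFin_unique _
          (fun x => Finset.mem_image_of_mem f.1 (Finset.mem_univ x)) f.2).symm
      right_inv := fun s => by
        ext : 1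
        apply Finset.coe_injective
        rw [Finset.coe_image, Finset.coe_univ, Set.image_univ,
          Finset.range_orderEmbOfFin] }
  rw [Fintype.card_congr e, Fintype.card_finset_len, Fintype.card_fin]

/-- Monotone maps `Fin m → Fin (n+1)` are counted by `(n+m).choose m`. -/
lemma card_monotoneFun (m n : ℕ) :
    (Finset.univ.filter fun f : Fin m → Fin (n + 1) => Monotone f).card
      = (n + m).choose m := by
  rw [← Fintype.card_subtype, ← card_strictMonoFun m (n + m), ← Fintype.card_subtype]
  apply Fintype.card_congr
  refine
    { toFun := fun f => ⟨fun i => ⟨(f.1 i : ℕ) + i, by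
        have := (f.1 i).isLt; have := i.isLt; omega⟩, ?_⟩
      invFun := fun g => ⟨fun i => ⟨(g.1 i : ℕ) - i, by
        have hm : 0 < m := i.pos
        have h := strictMono_add_le g.2 (i := ⟨0, hm⟩) (j := i) (by simp [Fin.le_def])
        have h2 := strictMono_add_le g.2 (i := i) (j := ⟨m - 1, by omega⟩) (by
          simp [Fin.le_def]; omega)
        have := (g.1 ⟨m - 1, by omega⟩).isLt
        simp only at h h2
        omega⟩, ?_⟩
      left_inv := fun f => by
        ext i : 3
        simp
      right_inv := fun g => by
        ext i : 3
        have hm : 0 < m := i.pos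
        have h := strictMono_add_le g.2 (i := ⟨0, hm⟩) (j := i) (by simp [Fin.le_def])
        simp only at h
        simp
        omega }
  · intro i j hij
    have h := f.2 hij.le
    simp only [Fin.le_def] at h
    simp only [Fin.lt_def] at hij ⊢
    omega
  · intro i j hij
    have h := strictMono_add_le g.2 hij
    simp only [Fin.le_def] at hij ⊢
    omega

private def rowExt {M d : ℕ} (c : Fin (d + 1)) (g : Fin M → Fin (d - (c : ℕ) + 1)) :
    Fin (M + 1) → Fin (d + 1) :=
  Fin.cases c (fun i => ⟨(c : ℕ) + g i, by have := (g i).isLt; omega⟩)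

@[simp] private lemma rowExt_zero {M d : ℕ} (c : Fin (d + 1))
    (g : Fin M → Fin (d - (c : ℕ) + 1)) : rowExt c g 0 = c := rfl

@[simp] private lemma rowExt_succ {M d : ℕ} (c : Fin (d + 1))
    (g : Fin M → Fin (d - (c : ℕ) + 1)) (i : Fin M) :
    (rowExt c g i.succ : ℕ) = (c : ℕ) + g i := by
  simp [rowExt]

private def colExt {N' d : ℕ} (c : Fin (d + 1)) (g : Fin N' → Fin (d - (c : ℕ))) :
    Fin (N' + 1) → Fin (d + 1) :=
  Fin.cases c (fun j => ⟨(c : ℕ) + 1 + g j, by have := (g j).isLt; omega⟩)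

@[simp] private lemma colExt_zero {N' d : ℕ} (c : Fin (d + 1))
    (g : Fin N' → Fin (d - (c : ℕ))) : colExt c g 0 = c := rfl

@[simp] private lemma colExt_succ {N' d : ℕ} (c : Fin (d + 1))
    (g : Fin N' → Fin (d - (c : ℕ))) (j : Fin N') :
    (colExt c g j.succ : ℕ) = (c : ℕ) + 1 + g j := by
  simp [colExt]

/-- Count of monotone rows with fixed first entry `c`. -/
lemma card_monotone_corner (M d : ℕ) (c : Fin (d + 1)) :
    (Finset.univ.filter fun a : Fin (M + 1) → Fin (d + 1) =>
        Monotone a ∧ a 0 = c).card = (d - (c : ℕ) + M).choose M := by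
  rw [← Fintype.card_subtype, ← card_monotoneFun M (d - (c : ℕ)), ← Fintype.card_subtype]
  apply Fintype.card_congr
  exact
    { toFun := fun a => ⟨fun i => ⟨(a.1 i.succ : ℕ) - c, by
        have h1 : a.1 0 ≤ a.1 i.succ := a.2.1 (Fin.zero_le _)
        have h2 := (a.1 i.succ).isLt
        have h3 : (a.1 0 : ℕ) = c := congrArg Fin.val a.2.2
        simp only [Fin.le_def] at h1
        omega⟩, by
        intro i j hij
        have h := a.2.1 (Fin.succ_le_succ_iff.mpr hij)
        simp only [Fin.le_def] at h ⊢
        omega⟩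
      invFun := fun g => ⟨rowExt c g.1, by
        intro i j hij
        induction j using Fin.cases with
        | zero =>
            have : i = 0 := le_antisymm (by exact_mod_cast hij) (Fin.zero_le _)
            simp [this]
        | succ j =>
            induction i using Fin.cases with
            | zero =>
                simp only [Fin.le_def, rowExt_zero, rowExt_succ]
                omega
            | succ i =>
                have h := g.2 (Fin.succ_le_succ_iff.mp hij)
                simp only [Fin.le_def, rowExt_succ] at h ⊢
                omega, by simp⟩
      left_inv := fun a => by
        ext i : 2
        induction i using Fin.cases with
        | zero => simp [a.2.2]
        | succ i =>
            have h1 : a.1 0 ≤ a.1 i.succ := a.2.1 (Fin.zero_le _)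
            have h3 : (a.1 0 : ℕ) = c := congrArg Fin.val a.2.2
            simp only [Fin.le_def] at h1
            refine Fin.val_inj.mp ?_
            rw [rowExt_succ]
            simp only
            omega
      right_inv := fun g => by
        ext i : 3
        simp }

/-- Count of strictly monotone columns with fixed first entry `c`. -/
lemma card_strictMono_corner (N' d : ℕ) (c : Fin (d + 1)) :
    (Finset.univ.filter fun b : Fin (N' + 1) → Fin (d + 1) =>
        StrictMono b ∧ b 0 = c).card = (d - (c : ℕ)).choose N' := by
  rw [← Fintype.card_subtype, ← card_strictMonoFun N' (d - (c : ℕ)), ← Fintype.card_subtype]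
  apply Fintype.card_congr
  exact
    { toFun := fun b => ⟨fun j => ⟨(b.1 j.succ : ℕ) - c - 1, by
        have h1 : b.1 0 < b.1 j.succ := b.2.1 (Fin.succ_pos j)
        have h2 := (b.1 j.succ).isLt
        have h3 : (b.1 0 : ℕ) = c := congrArg Fin.val b.2.2
        simp only [Fin.lt_def] at h1
        omega⟩, by
        intro i j hij
        have h := b.2.1 (Fin.succ_lt_succ_iff.mpr hij)
        have h1 : b.1 0 < b.1 i.succ := b.2.1 (Fin.succ_pos i)
        have h3 : (b.1 0 : ℕ) = c := congrArg Fin.val b.2.2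
        simp only [Fin.lt_def] at h h1 ⊢
        omega⟩
      invFun := fun g => ⟨colExt c g.1, by
        intro i j hij
        induction j using Fin.cases with
        | zero => exact absurd hij (Fin.not_lt_zero _)
        | succ j =>
            induction i using Fin.cases with
            | zero =>
                simp only [Fin.lt_def, colExt_zero, colExt_succ]
                omega
            | succ i =>
                have h := g.2 (Fin.succ_lt_succ_iff.mp hij)
                simp only [Fin.lt_def, colExt_succ] at h ⊢
                omega, by simp⟩
      left_inv := fun b => by
        ext j : 2
        induction j using Fin.cases with
        | zero => simp [b.2.2]
        | succ j =>
            have h1 : b.1 0 < b.1 j.succ := b.2.1 (Fin.succ_pos j)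
            have h3 : (b.1 0 : ℕ) = c := congrArg Fin.val b.2.2
            simp only [Fin.lt_def] at h1
            refine Fin.val_inj.mp ?_
            rw [colExt_succ]
            simp only
            omega
      right_inv := fun g => by
        ext j : 3
        simp
        omega }

/-- The semistandard tableaux of hook shape `(M+1, 1^{N-1})` with entries in
`{0, …, d}`, encoded as a pair `(a, b)` where `a : Fin (M+1) → Fin (d+1)` is the
weakly increasing top row and `b : Fin N → Fin (d+1)` is the strictly increasing
first column, sharing the corner entry `a 0 = b 0`. -/
def hookSSYT (M N d : ℕ) :
    Finset ((Fin (M + 1) → Fin (d + 1)) × (Fin N → Fin (d + 1))) :=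
  Finset.univ.filter fun t =>
    Monotone t.1 ∧ StrictMono t.2 ∧ ∀ h : 0 < N, t.1 0 = t.2 ⟨0, h⟩

/-- The number of semistandard tableaux of hook shape `(M+1, 1^{N-1})` with
entries in `{0, 1, …, d}` is `(d+M+1 choose M+N) · (M+N-1 choose M)`. -/
theorem card_hookSSYT (M N d : ℕ) (hN : 0 < N) (hNd : N ≤ d + 1) :
    (hookSSYT M N d).card = (d + M + 1).choose (M + N) * (M + N - 1).choose M := by
  obtain ⟨N', rfl⟩ : ∃ N', N = N' + 1 := ⟨N - 1, by omega⟩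
  have hN'd : N' ≤ d := by omega
  rw [hookSSYT,
    Finset.card_eq_sum_card_fiberwise (f := fun t => t.1 0) (t := Finset.univ)
      (fun x _ => Finset.mem_univ _)]
  have hfib : ∀ c : Fin (d + 1),
      ((Finset.univ.filter fun t : (Fin (M+1) → Fin (d+1)) × (Fin (N'+1) → Fin (d+1)) =>
          Monotone t.1 ∧ StrictMono t.2 ∧ ∀ h : 0 < N' + 1, t.1 0 = t.2 ⟨0, h⟩).filter
        (fun t => t.1 0 = c)).card
        = (d - (c : ℕ) + M).choose M * ((d - (c : ℕ)).choose N') := by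
    intro c
    rw [Finset.filter_filter]
    have hset :
        (Finset.univ.filter fun t : (Fin (M+1) → Fin (d+1)) × (Fin (N'+1) → Fin (d+1)) =>
            (Monotone t.1 ∧ StrictMono t.2 ∧ ∀ h : 0 < N' + 1, t.1 0 = t.2 ⟨0, h⟩) ∧ t.1 0 = c)
          = (Finset.univ.filter fun a : Fin (M+1) → Fin (d+1) => Monotone a ∧ a 0 = c) ×ˢ
            (Finset.univ.filter fun b : Fin (N'+1) → Fin (d+1) => StrictMono b ∧ b 0 = c) := by
      ext t
      simp only [Finset.mem_filter, Finset.mem_univ, true_and, Finset.mem_product]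
      constructor
      · rintro ⟨⟨h1, h2, h3⟩, h4⟩
        have h3' := h3 (Nat.succ_pos N')
        simp only [Fin.mk_zero] at h3'
        exact ⟨⟨h1, h4⟩, h2, by rw [← h3', h4]⟩
      · rintro ⟨⟨h1, h4⟩, h2, h5⟩
        refine ⟨⟨h1, h2, fun _ => by simp only [Fin.mk_zero]; rw [h4, h5]⟩, h4⟩
    rw [hset, Finset.card_product, card_monotone_corner, card_strictMono_corner]
  rw [Finset.sum_congr rfl (fun c _ => hfib c),
    Fin.sum_univ_eq_sum_range (fun k => (d - k + M).choose M * (d - k).choose N') (d + 1)]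
  have hrefl := Finset.sum_range_reflect
    (fun k => (d - k + M).choose M * (d - k).choose N') (d + 1)
  simp only [Nat.add_sub_cancel] at hrefl
  rw [← hrefl]
  have hstep : ∀ k ∈ Finset.range (d + 1),
      (d - (d - k) + M).choose M * (d - (d - k)).choose N'
        = (M + (d - (d - k))).choose (M + N') * (M + N').choose M := by
    intro k hk
    rcases le_or_gt N' (d - (d - k)) with h | h
    · rw [Nat.choose_mul (n := M + (d - (d - k))) (k := M + N') (s := M)
        (by omega),
        show M + (d - (d - k)) - M = d - (d - k) by omega,
        show M + N' - M = N' by omega, Nat.add_comm (d - (d - k)) M]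
    · rw [Nat.choose_eq_zero_of_lt h,
        Nat.choose_eq_zero_of_lt (show M + (d - (d - k)) < M + N' by omega),
        Nat.mul_zero, Nat.zero_mul]
  rw [Finset.sum_congr rfl hstep, ← Finset.sum_mul]
  have hsum : ∑ k ∈ Finset.range (d + 1), (M + (d - (d - k))).choose (M + N')
      = (d + M + 1).choose (M + N' + 1) := by
    have hz : ∀ k ∈ Finset.range (d + 1), k ∉ Finset.Ico N' (d + 1) →
        (M + (d - (d - k))).choose (M + N') = 0 := by
      intro k hk hk'
      simp only [Finset.mem_range] at hk
      simp only [Finset.mem_Ico] at hk'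
      have : k < N' := by omega
      exact Nat.choose_eq_zero_of_lt (by omega)
    rw [← Finset.sum_subset (fun x hx => by
        simp only [Finset.mem_Ico] at hx; exact Finset.mem_range.mpr hx.2) hz,
      Finset.sum_Ico_eq_sum_range]
    have hn : d + 1 - N' = (d - N') + 1 := by omega
    rw [hn]
    have : ∀ i ∈ Finset.range (d - N' + 1),
        (M + (d - (d - (N' + i)))).choose (M + N') = (i + (M + N')).choose (M + N') := by
      intro i hi
      simp only [Finset.mem_range] at hi
      congr 1
      omega
    rw [Finset.sum_congr rfl this, Nat.sum_range_add_choose]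
    congr 1
    omega
  rw [hsum, show M + (N' + 1) - 1 = M + N' by omega,
    show M + (N' + 1) = M + N' + 1 by omega]
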